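/- Let n ≥ 1, let φ_1,…,φ_n be the hat functions on [0,1], let b, c : [0,1] → ℝ be Lebesgue integrable, and define the n×n matrix Z_n by (Z_n)_{ij} = ∫₀¹ b(x) φ_j'(x) φ_i(x) dx + ∫₀¹ c(x) φ_j(x) φ_i(x) dx. Suppose W ≥ 0 satisfies ∫_E |b(x)| dx ≤ W for every measurable set E ⊆ [0,1] with Lebesgue measure ≤ 2/(n+1). Then: (i) (Z_n)_{ij} = 0 whenever |i − j| > 1; (ii) |(Z_n)_{ij}| ≤ (n+1)·W + ∫₀¹|c(x)| dx for all i, j; and hence (iii) ‖Z_n‖₂² ≤ 3n·[(n+1)·W + ∫₀¹|c(x)| dx]². -/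

import Mathlib

open MeasureTheory intervalIntegral

/-- Frobenius norm of a real square matrix. -/
noncomputable def frobR {n : ℕ} (X : Matrix (Fin n) (Fin n) ℝ) : ℝ :=
  Real.sqrt (∑ i, ∑ j, (X i j) ^ 2)

/-- The hat function `φ_i` on `[0,1]` for the uniform grid `x_i = i/(n+1)`. -/
noncomputable def hat (n i : ℕ) (x : ℝ) : ℝ :=
  if x ∈ Set.Ico (((i : ℝ) - 1) * (1 / ((n : ℝ) + 1))) ((i : ℝ) * (1 / ((n : ℝ) + 1))) then
    (x - ((i : ℝ) - 1) * (1 / ((n : ℝ) + 1))) / (1 / ((n : ℝ) + 1))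
  else if x ∈ Set.Ico ((i : ℝ) * (1 / ((n : ℝ) + 1))) (((i : ℝ) + 1) * (1 / ((n : ℝ) + 1))) then
    (((i : ℝ) + 1) * (1 / ((n : ℝ) + 1)) - x) / (1 / ((n : ℝ) + 1))
  else 0

/-- The (weak) derivative of the hat function `φ_i`. -/
noncomputable def hatDeriv (n i : ℕ) (x : ℝ) : ℝ :=
  if x ∈ Set.Ioo (((i : ℝ) - 1) * (1 / ((n : ℝ) + 1))) ((i : ℝ) * (1 / ((n : ℝ) + 1))) then
    (n : ℝ) + 1
  else if x ∈ Set.Ioo ((i : ℝ) * (1 / ((n : ℝ) + 1))) (((i : ℝ) + 1) * (1 / ((n : ℝ) + 1))) then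
    -((n : ℝ) + 1)
  else 0

lemma hat_hpos (n : ℕ) : (0:ℝ) < 1 / ((n:ℝ)+1) := by positivity

lemma hat_nonneg (n i : ℕ) (x : ℝ) : 0 ≤ hat n i x := by
  have hp := hat_hpos n
  unfold hat
  split_ifs with h1 h2
  · exact div_nonneg (by linarith [h1.1]) hp.le
  · exact div_nonneg (by linarith [h2.2]) hp.le
  · exact le_refl 0

lemma hat_le_one (n i : ℕ) (x : ℝ) : hat n i x ≤ 1 := by
  have hp := hat_hpos n
  have e1 : (i:ℝ) * (1/((n:ℝ)+1)) = ((i:ℝ)-1) * (1/((n:ℝ)+1)) + 1/((n:ℝ)+1) := by ring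
  have e2 : ((i:ℝ)+1) * (1/((n:ℝ)+1)) = (i:ℝ) * (1/((n:ℝ)+1)) + 1/((n:ℝ)+1) := by ring
  unfold hat
  split_ifs with h1 h2
  · rw [div_le_one hp]; linarith [h1.2]
  · rw [div_le_one hp]; linarith [h2.1]
  · linarith

lemma abs_hat_le_one (n i : ℕ) (x : ℝ) : |hat n i x| ≤ 1 :=
  abs_le.mpr ⟨by linarith [hat_nonneg n i x], hat_le_one n i x⟩

lemma abs_hatDeriv_le (n i : ℕ) (x : ℝ) : |hatDeriv n i x| ≤ (n:ℝ) + 1 := by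
  unfold hatDeriv
  split_ifs
  · rw [abs_of_nonneg (by positivity)]
  · rw [abs_neg, abs_of_nonneg (by positivity)]
  · simp; positivity

lemma hat_eq_zero {n i : ℕ} {x : ℝ}
    (hx : x ∉ Set.Ico (((i:ℝ)-1) * (1/((n:ℝ)+1))) (((i:ℝ)+1) * (1/((n:ℝ)+1)))) :
    hat n i x = 0 := by
  have hp := hat_hpos n
  have e1 : ((i:ℝ)-1) * (1/((n:ℝ)+1)) ≤ (i:ℝ) * (1/((n:ℝ)+1)) := by nlinarith
  have e2 : (i:ℝ) * (1/((n:ℝ)+1)) ≤ ((i:ℝ)+1) * (1/((n:ℝ)+1)) := by nlinarith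
  unfold hat
  split_ifs with h1 h2
  · exact absurd ⟨h1.1, h1.2.trans_le e2⟩ hx
  · exact absurd ⟨e1.trans h2.1, h2.2⟩ hx
  · rfl

lemma hatDeriv_eq_zero {n i : ℕ} {x : ℝ}
    (hx : x ∉ Set.Ioo (((i:ℝ)-1) * (1/((n:ℝ)+1))) (((i:ℝ)+1) * (1/((n:ℝ)+1)))) :
    hatDeriv n i x = 0 := by
  have hp := hat_hpos n
  have e1 : ((i:ℝ)-1) * (1/((n:ℝ)+1)) ≤ (i:ℝ) * (1/((n:ℝ)+1)) := by nlinarith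
  have e2 : (i:ℝ) * (1/((n:ℝ)+1)) ≤ ((i:ℝ)+1) * (1/((n:ℝ)+1)) := by nlinarith
  unfold hatDeriv
  split_ifs with h1 h2
  · exact absurd ⟨h1.1, h1.2.trans_le e2⟩ hx
  · exact absurd ⟨e1.trans_lt h2.1, h2.2⟩ hx
  · rfl

lemma measurable_hat (n i : ℕ) : Measurable (hat n i) := by
  unfold hat
  exact Measurable.ite measurableSet_Ico (by fun_prop)
    (Measurable.ite measurableSet_Ico (by fun_prop) measurable_const)

lemma measurable_hatDeriv (n i : ℕ) : Measurable (hatDeriv n i) := by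
  unfold hatDeriv
  exact Measurable.ite measurableSet_Ioo measurable_const
    (Measurable.ite measurableSet_Ioo measurable_const measurable_const)

lemma integrable_prod_b {n k i : ℕ} {b : ℝ → ℝ}
    (hb : Integrable b (volume.restrict (Set.Ioc (0:ℝ) 1))) :
    Integrable (fun x => b x * hatDeriv n k x * hat n i x)
      (volume.restrict (Set.Ioc (0:ℝ) 1)) := by
  have h1 : Integrable (fun x => (hatDeriv n k x * hat n i x) * b x)
      (volume.restrict (Set.Ioc (0:ℝ) 1)) :=
    hb.bdd_mul (c := (n:ℝ)+1) ((measurable_hatDeriv n k).mul (measurable_hat n i)).aestronglyMeasurable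
      (ae_of_all _ fun x => by
        rw [Real.norm_eq_abs, abs_mul]
        calc |hatDeriv n k x| * |hat n i x| ≤ ((n:ℝ)+1) * 1 :=
              mul_le_mul (abs_hatDeriv_le n k x) (abs_hat_le_one n i x) (abs_nonneg _)
                (by positivity)
          _ = (n:ℝ)+1 := mul_one _)
  exact h1.congr (ae_of_all _ fun x => by ring)

lemma integrable_prod_c {n k i : ℕ} {c : ℝ → ℝ}
    (hc : Integrable c (volume.restrict (Set.Ioc (0:ℝ) 1))) :
    Integrable (fun x => c x * hat n k x * hat n i x)
      (volume.restrict (Set.Ioc (0:ℝ) 1)) := by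
  have h1 : Integrable (fun x => (hat n k x * hat n i x) * c x)
      (volume.restrict (Set.Ioc (0:ℝ) 1)) :=
    hc.bdd_mul (c := 1) ((measurable_hat n k).mul (measurable_hat n i)).aestronglyMeasurable
      (ae_of_all _ fun x => by
        rw [Real.norm_eq_abs, abs_mul]
        calc |hat n k x| * |hat n i x| ≤ 1 * 1 :=
              mul_le_mul (abs_hat_le_one n k x) (abs_hat_le_one n i x) (abs_nonneg _)
                (by positivity)
          _ = 1 := mul_one _)
  exact h1.congr (ae_of_all _ fun x => by ring)

lemma key_b_bound (n k i : ℕ) (b : ℝ → ℝ)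
    (hb : IntegrableOn b (Set.Icc (0:ℝ) 1) volume) (W : ℝ)
    (hW : ∀ E : Set ℝ, E ⊆ Set.Icc (0:ℝ) 1 → MeasurableSet E →
      volume E ≤ ENNReal.ofReal (2/((n:ℝ)+1)) → ∫ x in E, |b x| ≤ W) :
    |∫ x in (0:ℝ)..1, b x * hatDeriv n k x * hat n i x| ≤ ((n:ℝ)+1) * W := by
  set hh : ℝ := 1/((n:ℝ)+1) with hhh
  set E : Set ℝ := Set.Icc (((k:ℝ)-1)*hh) (((k:ℝ)+1)*hh) with hE
  have hEm : MeasurableSet E := measurableSet_Icc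
  have hbI : Integrable b (volume.restrict (Set.Ioc (0:ℝ) 1)) :=
    hb.mono_set Set.Ioc_subset_Icc_self
  have hfI := integrable_prod_b (n:=n) (k:=k) (i:=i) hbI
  rw [intervalIntegral.integral_of_le (by norm_num : (0:ℝ) ≤ 1)]
  set g : ℝ → ℝ := fun x => ((n:ℝ)+1) * E.indicator (fun y => |b y|) x with hg
  have hgI : Integrable g (volume.restrict (Set.Ioc (0:ℝ) 1)) :=
    ((hbI.abs).indicator hEm).const_mul _
  have hle : ∀ x, |b x * hatDeriv n k x * hat n i x| ≤ g x := by
    intro x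
    by_cases hx : x ∈ E
    · rw [hg]; simp only [Set.indicator_of_mem hx]
      rw [abs_mul, abs_mul]
      calc |b x| * |hatDeriv n k x| * |hat n i x|
          ≤ |b x| * ((n:ℝ)+1) * 1 :=
            mul_le_mul (mul_le_mul_of_nonneg_left (abs_hatDeriv_le n k x) (abs_nonneg _))
              (abs_hat_le_one n i x) (abs_nonneg _) (by positivity)
        _ = ((n:ℝ)+1) * |b x| := by ring
    · have hD : hatDeriv n k x = 0 := hatDeriv_eq_zero (fun hmem => hx ⟨hmem.1.le, hmem.2.le⟩)
      rw [hg]; simp [Set.indicator_of_notMem hx, hD]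
  have hWnn : 0 ≤ W := by
    have := hW ∅ (by simp) MeasurableSet.empty (by simp)
    simpa using this
  calc |∫ x in Set.Ioc (0:ℝ) 1, b x * hatDeriv n k x * hat n i x|
      ≤ ∫ x in Set.Ioc (0:ℝ) 1, |b x * hatDeriv n k x * hat n i x| := by
        simpa only [Real.norm_eq_abs] using
          norm_integral_le_integral_norm (μ := volume.restrict (Set.Ioc (0:ℝ) 1))
            (fun x => b x * hatDeriv n k x * hat n i x)
    _ ≤ ∫ x in Set.Ioc (0:ℝ) 1, g x := integral_mono hfI.abs hgI hle
    _ = ((n:ℝ)+1) * ∫ x in Set.Ioc (0:ℝ) 1, E.indicator (fun y => |b y|) x := by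
        simp only [hg]; rw [MeasureTheory.integral_const_mul]
    _ = ((n:ℝ)+1) * ∫ x in E ∩ Set.Ioc (0:ℝ) 1, |b x| := by
        rw [MeasureTheory.integral_indicator hEm, Measure.restrict_restrict hEm]
    _ ≤ ((n:ℝ)+1) * W := by
        have h1 : ∫ x in E ∩ Set.Ioc (0:ℝ) 1, |b x| ≤ W := by
          apply hW _ ((Set.inter_subset_right).trans Set.Ioc_subset_Icc_self)
            (hEm.inter measurableSet_Ioc)
          refine le_trans (measure_mono Set.inter_subset_left) ?_
          rw [hE, Real.volume_Icc]
          apply le_of_eq; congr 1; rw [hhh]; ring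
        have : (0:ℝ) ≤ (n:ℝ)+1 := by positivity
        exact mul_le_mul_of_nonneg_left h1 this

lemma key_c_bound (n k i : ℕ) (c : ℝ → ℝ)
    (hc : IntegrableOn c (Set.Icc (0:ℝ) 1) volume) :
    |∫ x in (0:ℝ)..1, c x * hat n k x * hat n i x| ≤ ∫ x in Set.Icc (0:ℝ) 1, |c x| := by
  have hcI : Integrable c (volume.restrict (Set.Ioc (0:ℝ) 1)) :=
    hc.mono_set Set.Ioc_subset_Icc_self
  have hfI := integrable_prod_c (n:=n) (k:=k) (i:=i) hcI
  rw [intervalIntegral.integral_of_le (by norm_num : (0:ℝ) ≤ 1),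
    integral_Icc_eq_integral_Ioc]
  calc |∫ x in Set.Ioc (0:ℝ) 1, c x * hat n k x * hat n i x|
      ≤ ∫ x in Set.Ioc (0:ℝ) 1, |c x * hat n k x * hat n i x| := by
        simpa only [Real.norm_eq_abs] using
          norm_integral_le_integral_norm (μ := volume.restrict (Set.Ioc (0:ℝ) 1))
            (fun x => c x * hat n k x * hat n i x)
    _ ≤ ∫ x in Set.Ioc (0:ℝ) 1, |c x| := by
        apply integral_mono hfI.abs hcI.abs
        intro x
        dsimp only
        rw [abs_mul, abs_mul]
        calc |c x| * |hat n k x| * |hat n i x|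
            ≤ |c x| * 1 * 1 :=
              mul_le_mul (mul_le_mul_of_nonneg_left (abs_hat_le_one n k x) (abs_nonneg _))
                (abs_hat_le_one n i x) (abs_nonneg _) (by positivity)
          _ = |c x| := by ring
lemma prod_zero_of_far_b (n : ℕ) (i j : ℕ) (hij : 1 < ((i:ℤ) - (j:ℤ)).natAbs)
    (b : ℝ → ℝ) (x : ℝ) :
    b x * hatDeriv n (j+1) x * hat n (i+1) x = 0 := by
  by_contra hne
  have hD : hatDeriv n (j+1) x ≠ 0 := fun h => hne (by rw [h]; ring)
  have hH : hat n (i+1) x ≠ 0 := fun h => hne (by rw [h]; ring)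
  have hp := hat_hpos n
  have hx1 : x ∈ Set.Ioo ((((j+1:ℕ):ℝ)-1)*(1/((n:ℝ)+1)))
      ((((j+1:ℕ):ℝ)+1)*(1/((n:ℝ)+1))) := by
    by_contra h; exact hD (hatDeriv_eq_zero h)
  have hx2 : x ∈ Set.Ico ((((i+1:ℕ):ℝ)-1)*(1/((n:ℝ)+1)))
      ((((i+1:ℕ):ℝ)+1)*(1/((n:ℝ)+1))) := by
    by_contra h; exact hH (hat_eq_zero h)
  obtain ⟨h1, h2⟩ := hx1
  obtain ⟨h3, h4⟩ := hx2
  push_cast at h1 h2 h3 h4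
  obtain hcase | hcase : (i:ℤ) - j ≤ -2 ∨ 2 ≤ (i:ℤ) - j := by omega
  · have hji : (i:ℝ) + 2 ≤ (j:ℝ) := by exact_mod_cast (by omega : (i:ℤ) + 2 ≤ (j:ℤ))
    have := mul_le_mul_of_nonneg_right hji hp.le
    linarith
  · have hji : (j:ℝ) + 2 ≤ (i:ℝ) := by exact_mod_cast (by omega : (j:ℤ) + 2 ≤ (i:ℤ))
    have := mul_le_mul_of_nonneg_right hji hp.le
    linarith

lemma prod_zero_of_far_c (n : ℕ) (i j : ℕ) (hij : 1 < ((i:ℤ) - (j:ℤ)).natAbs)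
    (c : ℝ → ℝ) (x : ℝ) :
    c x * hat n (j+1) x * hat n (i+1) x = 0 := by
  by_contra hne
  have hD : hat n (j+1) x ≠ 0 := fun h => hne (by rw [h]; ring)
  have hH : hat n (i+1) x ≠ 0 := fun h => hne (by rw [h]; ring)
  have hp := hat_hpos n
  have hx1 : x ∈ Set.Ico ((((j+1:ℕ):ℝ)-1)*(1/((n:ℝ)+1)))
      ((((j+1:ℕ):ℝ)+1)*(1/((n:ℝ)+1))) := by
    by_contra h; exact hD (hat_eq_zero h)
  have hx2 : x ∈ Set.Ico ((((i+1:ℕ):ℝ)-1)*(1/((n:ℝ)+1)))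
      ((((i+1:ℕ):ℝ)+1)*(1/((n:ℝ)+1))) := by
    by_contra h; exact hH (hat_eq_zero h)
  obtain ⟨h1, h2⟩ := hx1
  obtain ⟨h3, h4⟩ := hx2
  push_cast at h1 h2 h3 h4
  obtain hcase | hcase : (i:ℤ) - j ≤ -2 ∨ 2 ≤ (i:ℤ) - j := by omega
  · have hji : (i:ℝ) + 2 ≤ (j:ℝ) := by exact_mod_cast (by omega : (i:ℤ) + 2 ≤ (j:ℤ))
    have := mul_le_mul_of_nonneg_right hji hp.le
    linarith
  · have hji : (j:ℝ) + 2 ≤ (i:ℝ) := by exact_mod_cast (by omega : (j:ℤ) + 2 ≤ (i:ℤ))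
    have := mul_le_mul_of_nonneg_right hji hp.le
    linarith

lemma card_band (n : ℕ) (i : Fin n) :
    (Finset.univ.filter (fun j : Fin n => ((i:ℤ) - (j:ℤ)).natAbs ≤ 1)).card ≤ 3 := by
  have h := Finset.card_le_card_of_injOn (fun j : Fin n => ((j:ℕ):ℤ))
    (s := Finset.univ.filter fun j : Fin n => ((i:ℤ) - (j:ℤ)).natAbs ≤ 1)
    (t := Finset.Icc ((i:ℤ)-1) ((i:ℤ)+1))
    (fun j hj => by
      simp only [Finset.mem_coe, Finset.mem_filter, Finset.mem_univ, true_and] at hj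
      simp only [Finset.mem_coe, Finset.mem_Icc]; omega)
    (fun a _ b _ hab => by
      simp only at hab
      exact Fin.ext (by exact_mod_cast hab))
  rw [Int.card_Icc] at h
  omega


/-- Estimates for the FE convection-plus-reaction matrix
`(Z_n)_{ij} = ∫₀¹ b φ_j' φ_i + ∫₀¹ c φ_j φ_i` with integrable `b, c`: if `W` bounds
`∫_E |b|` over all measurable `E ⊆ [0,1]` of measure `≤ 2/(n+1)`, then `Z_n` is
tridiagonal, `|(Z_n)_{ij}| ≤ (n+1)W + ∫₀¹|c|`, and `‖Z_n‖₂² ≤ 3n[(n+1)W + ∫₀¹|c|]²`. -/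
theorem fe_convection_reaction_matrix_bounds
    (n : ℕ) (hn : 1 ≤ n) (b c : ℝ → ℝ)
    (hb : IntegrableOn b (Set.Icc (0 : ℝ) 1) volume)
    (hc : IntegrableOn c (Set.Icc (0 : ℝ) 1) volume)
    (W : ℝ)
    (hW : ∀ E : Set ℝ, E ⊆ Set.Icc (0 : ℝ) 1 → MeasurableSet E →
      volume E ≤ ENNReal.ofReal (2 / ((n : ℝ) + 1)) → ∫ x in E, |b x| ≤ W) :
    let Z : Matrix (Fin n) (Fin n) ℝ := Matrix.of fun i j =>
      (∫ x in (0 : ℝ)..1, b x * hatDeriv n ((j : ℕ) + 1) x * hat n ((i : ℕ) + 1) x) +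
        ∫ x in (0 : ℝ)..1, c x * hat n ((j : ℕ) + 1) x * hat n ((i : ℕ) + 1) x
    (∀ i j : Fin n, 1 < ((i : ℤ) - (j : ℤ)).natAbs → Z i j = 0) ∧
    (∀ i j : Fin n,
      |Z i j| ≤ ((n : ℝ) + 1) * W + ∫ x in Set.Icc (0 : ℝ) 1, |c x|) ∧
    (frobR Z) ^ 2 ≤
      3 * (n : ℝ) * (((n : ℝ) + 1) * W + ∫ x in Set.Icc (0 : ℝ) 1, |c x|) ^ 2 := by
  intro Z
  have hZ : ∀ i j : Fin n, Z i j =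
      (∫ x in (0:ℝ)..1, b x * hatDeriv n ((j:ℕ)+1) x * hat n ((i:ℕ)+1) x) +
        ∫ x in (0:ℝ)..1, c x * hat n ((j:ℕ)+1) x * hat n ((i:ℕ)+1) x := fun i j => rfl
  have part1 : ∀ i j : Fin n, 1 < ((i:ℤ) - (j:ℤ)).natAbs → Z i j = 0 := by
    intro i j hij
    rw [hZ]
    have e1 := prod_zero_of_far_b n i j hij b
    have e2 := prod_zero_of_far_c n i j hij c
    simp only [e1, e2, intervalIntegral.integral_zero, add_zero]
  set M : ℝ := ((n:ℝ)+1)*W + ∫ x in Set.Icc (0:ℝ) 1, |c x| with hM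
  have part2 : ∀ i j : Fin n, |Z i j| ≤ M := by
    intro i j
    rw [hZ, hM]
    refine le_trans (abs_add_le _ _) (add_le_add ?_ ?_)
    · exact key_b_bound n ((j:ℕ)+1) ((i:ℕ)+1) b hb W hW
    · exact key_c_bound n ((j:ℕ)+1) ((i:ℕ)+1) c hc
  have hsq : ∀ i j : Fin n, (Z i j)^2 ≤ M^2 := fun i j => by
    have h := abs_le.mp (part2 i j)
    exact sq_le_sq' (by linarith [h.1]) h.2
  have hrow : ∀ i : Fin n, ∑ j, (Z i j)^2 ≤ 3 * M^2 := by
    intro i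
    set T := Finset.univ.filter (fun j : Fin n => ((i:ℤ) - (j:ℤ)).natAbs ≤ 1) with hT
    have h1 : ∑ j, (Z i j)^2 = ∑ j ∈ T, (Z i j)^2 := by
      refine (Finset.sum_subset (Finset.subset_univ T) ?_).symm
      intro j _ hj
      rw [hT] at hj
      simp only [Finset.mem_filter, Finset.mem_univ, true_and, not_le] at hj
      rw [part1 i j hj]; norm_num
    rw [h1]
    calc ∑ j ∈ T, (Z i j)^2 ≤ ∑ _j ∈ T, M^2 := Finset.sum_le_sum (fun j _ => hsq i j)
      _ = T.card * M^2 := by rw [Finset.sum_const, nsmul_eq_mul]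
      _ ≤ 3 * M^2 := by
          have h3 : T.card ≤ 3 := by rw [hT]; exact card_band n i
          have h2 : (T.card:ℝ) ≤ 3 := by exact_mod_cast h3
          nlinarith [sq_nonneg M]
  have hsum : ∑ i, ∑ j, (Z i j)^2 ≤ 3 * (n:ℝ) * M^2 := by
    calc ∑ i, ∑ j, (Z i j)^2 ≤ ∑ _i : Fin n, 3*M^2 := Finset.sum_le_sum (fun i _ => hrow i)
      _ = n * (3*M^2) := by
          rw [Finset.sum_const, Finset.card_univ, Fintype.card_fin, nsmul_eq_mul]
      _ = 3*(n:ℝ)*M^2 := by ring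
  have hfr : (frobR Z)^2 = ∑ i, ∑ j, (Z i j)^2 := by
    rw [frobR, Real.sq_sqrt]
    positivity
  exact ⟨part1, part2, by rw [hfr]; exact hsum⟩
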